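/- arXiv:0803.3980 — 3 statements merged into one kernel-verified Lean document; each statement's English description precedes it below -/
import Mathlib

section
/- For a list λ = (λ_1,…,λ_n) of integers with n ≥ 2, define 𝒴(λ) := ∏_{i=1}^n Y(λ_i - i + 1, λ_i). For each j with 1 ≤ j ≤ n-1, let Δ_j λ := (λ_1,…,λ_{j-1}, λ_{j+1}-1, λ_j+1, λ_{j+2},…,λ_n). Then 𝒴(Δ_j λ) = 𝒴(λ). -/
/-- `Yprod y m k` is the product `y_m · y_{m-1} ⋯ y_{m+1-k}` for `k ≥ 1`,
`1` for `k = 0`, and `Y(m-k,-k)⁻¹` for `k ≤ -1`. -/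
noncomputable def Yprod {R : Type*} [CommRing R] (y : ℤ → Rˣ) (m k : ℤ) : Rˣ :=
  if 0 ≤ k then ∏ j ∈ Finset.range k.toNat, y (m - j)
  else (∏ j ∈ Finset.range (-k).toNat, y ((m - k) - j))⁻¹

/-- `𝒴(λ) = ∏_{i=1}^n Y(λ_i - i + 1, λ_i)` for a list `λ` of `n` integers,
here `0`-indexed: `l i` is `λ_{i+1}`, so `λ_i - i + 1` becomes `l i - i`. -/
noncomputable def calY {R : Type*} [CommRing R] (y : ℤ → Rˣ) (n : ℕ) (l : ℕ → ℤ) : Rˣ :=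
  ∏ i ∈ Finset.range n, Yprod y (l i - i) (l i)

/-- `Δ_j λ = (λ_1,…,λ_{j-1}, λ_{j+1}-1, λ_j+1, λ_{j+2},…,λ_n)`,
`0`-indexed: position `j` (`0`-indexed) gets `λ_{j+2}-1` etc. -/
def Delta (j : ℕ) (l : ℕ → ℤ) : ℕ → ℤ := fun i =>
  if i = j then l (j + 1) - 1 else if i = j + 1 then l j + 1 else l i

lemma Yprod_succ {R : Type*} [CommRing R] (y : ℤ → Rˣ) (m k : ℤ) :
    Yprod y m (k + 1) = Yprod y m k * y (m - k) := by
  rcases le_or_gt 0 k with h | h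
  · have h1 : (0:ℤ) ≤ k + 1 := by linarith
    simp only [Yprod, if_pos h, if_pos h1]
    have ht : (k+1).toNat = k.toNat + 1 := by omega
    rw [ht, Finset.prod_range_succ, Int.toNat_of_nonneg h]
  · rcases eq_or_lt_of_le (show k ≤ -1 by omega) with he | hlt
    · subst he
      simp [Yprod]
    · have h1 : ¬ (0:ℤ) ≤ k + 1 := by omega
      have h2 : ¬ (0:ℤ) ≤ k := by omega
      simp only [Yprod, if_neg h1, if_neg h2]
      have hN : (-k).toNat = (-(k+1)).toNat + 1 := by omega
      rw [hN, Finset.prod_range_succ']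
      have harg : ∀ t : ℕ, m - k - ((t:ℤ) + 1) = m - (k+1) - t := by intro t; ring
      simp only [push_cast, Nat.cast_add, Nat.cast_one, harg]
      simp [mul_assoc]

/-- For a list `λ` of `n ≥ 2` integers and `1 ≤ j ≤ n-1` (here `0`-indexed:
`j + 1 < n`), one has `𝒴(Δ_j λ) = 𝒴(λ)`. -/
theorem stmt1 {R : Type*} [CommRing R] (y : ℤ → Rˣ) (n : ℕ) (hn : 2 ≤ n)
    (l : ℕ → ℤ) (j : ℕ) (hj : j + 1 < n) :
    calY y n (Delta j l) = calY y n l := by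
  unfold calY
  have hj1 : j ∈ Finset.range n := by simp; omega
  have hj2 : j + 1 ∈ (Finset.range n).erase j := by simp; omega
  rw [← Finset.mul_prod_erase _ _ hj1, ← Finset.mul_prod_erase _ _ hj2,
      ← Finset.mul_prod_erase _ (fun i => Yprod y (l i - i) (l i)) hj1,
      ← Finset.mul_prod_erase _ (fun i => Yprod y (l i - i) (l i)) hj2]
  have hrest : ∏ i ∈ ((Finset.range n).erase j).erase (j+1),
      Yprod y (Delta j l i - i) (Delta j l i)
      = ∏ i ∈ ((Finset.range n).erase j).erase (j+1), Yprod y (l i - i) (l i) := by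
    refine Finset.prod_congr rfl (fun i hi => ?_)
    simp only [Finset.mem_erase] at hi
    simp [Delta, hi.1, hi.2.1]
  rw [hrest, ← mul_assoc, ← mul_assoc]
  congr 1
  have hd1 : Delta j l j = l (j+1) - 1 := by simp [Delta]
  have hd2 : Delta j l (j+1) = l j + 1 := by simp [Delta]
  rw [hd1, hd2]
  push_cast
  set a := l j with ha
  set b := l (j+1) with hb
  have e1 : Yprod y (a + 1 - ((j:ℤ) + 1)) (a + 1) = Yprod y (a - j) a * y (-(j:ℤ)) := by
    have := Yprod_succ y (a - j) a
    have h2 : a - (j:ℤ) - a = -(j:ℤ) := by ring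
    have h3 : a + 1 - ((j:ℤ) + 1) = a - j := by ring
    rw [h3, this, h2]
  have e2 : Yprod y (b - ((j:ℤ)+1)) (b - 1) * y (-(j:ℤ)) = Yprod y (b - ((j:ℤ)+1)) b := by
    have := Yprod_succ y (b - ((j:ℤ)+1)) (b-1)
    have h2 : b - ((j:ℤ)+1) - (b - 1) = -(j:ℤ) := by ring
    have h3 : b - 1 + 1 = b := by ring
    rw [h2, h3] at this
    exact this.symm
  have h5 : b - 1 - (j:ℤ) = b - ((j:ℤ)+1) := by ring
  rw [h5, e1, ← e2]
  exact mul_left_comm _ _ _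
end

section
/- If T is the formal power series solution of T = z(p_1 + p_3 T²) with T(0)=0, then 1/(1 - 2 p_3 z T) = 1/√(1 - 4 p_1 p_3 z²), i.e., (1 - 2p_3zT)·S = 1 where S is the formal power series inverse square root of 1 - 4p_1p_3z², equivalently (1-2p_3zT)² = 1 - 4p_1p_3z². -/
open PowerSeries

/-- Coefficient ring `ℚ[p₁, p₃]`: `p₁` is `X 0`, `p₃` is `X 1`. -/
noncomputable abbrev Rp : Type := MvPolynomial (Fin 2) ℚ

noncomputable abbrev p1 : Rp := MvPolynomial.X 0
noncomputable abbrev p3 : Rp := MvPolynomial.X 1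

/-- `T` is a formal power series in `z` over `ℚ[p₁,p₃]` with zero constant
term satisfying the functional equation `T = z(p₁ + p₃ T²)`. -/
def IsTreeSeries (T : PowerSeries Rp) : Prop :=
  PowerSeries.constantCoeff T = 0 ∧
    T = PowerSeries.X * (PowerSeries.C p1 + PowerSeries.C p3 * T ^ 2)

/-- If `T` is the formal power series solution of `T = z(p₁ + p₃T²)` with
`T(0) = 0`, then `1/(1-2p₃zT) = 1/√(1-4p₁p₃z²)`; equivalently
`(1 - 2p₃zT)² = 1 - 4p₁p₃z²`. -/
theorem stmt10 (T : PowerSeries Rp) (hT : IsTreeSeries T) :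
    (1 - 2 * PowerSeries.C p3 * PowerSeries.X * T) ^ 2 =
      1 - 4 * PowerSeries.C p1 * PowerSeries.C p3 * PowerSeries.X ^ 2 := by
  linear_combination (-4 * PowerSeries.C p3 * PowerSeries.X) * hT.2
end

section
/- With the definitions b_{γ^{(k)}} = 𝒴(γ^{(k)}) s_{γ^{(k)}} given via the Jacobi–Trudi determinant (h's indexed by possibly negative integers, with h_r = 0 for r < 0), the alternating sum ∑_{k=0}^{m} (-1)^k s_{γ^{(k)}} s_{δ^{(k)}} = 0, where γ^{(k)} = (α_1-1,…,α_{m-1}-1, β_{k+1}+m-k) and δ^{(k)} = (β_1+1,…,β_k+1, β_{k+2},…,β_{m+1}), the s of a list of n integers ν being defined as det(h_{ν_i - i + j})_{1≤i,j≤n}. That is, the generalized Schur functions satisfy the single Plücker relation ∑_{k=0}^m (-1)^k s_{γ^{(k)}} s_{δ^{(k)}} = 0 for any integers α_1,…,α_{m-1}, β_1,…,β_{m+1} and m ≥ 1. -/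
/-- The generalized Schur function of an arbitrary integer list
`ν = (ν_1,…,ν_n)`, defined via the Jacobi–Trudi determinant
`s_ν = det(h_{ν_i - i + j})_{1≤i,j≤n}`, for a family `h : ℤ → R`. -/
noncomputable def sJT {R : Type*} [CommRing R] (h : ℤ → R) {n : ℕ}
    (ν : Fin n → ℤ) : R :=
  Matrix.det (Matrix.of fun i j : Fin n => h (ν i - (i : ℕ) + (j : ℕ)))

lemma plucker_aux {R : Type*} [CommRing R] {n : ℕ}
    (A : Fin n → Fin (n + 1) → R) (u : Fin (n + 2) → Fin (n + 1) → R) :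
    ∑ k : Fin (n + 2), (-1 : R) ^ (k : ℕ) *
      Matrix.det (Matrix.of (Fin.snoc A (u k))) *
      Matrix.det (Matrix.of fun i j => u (k.succAbove i) j) = 0 := by
  set D : Fin (n + 2) → R := fun k => Matrix.det (Matrix.of fun i j => u (k.succAbove i) j)
    with hD
  have key : ∀ j : Fin (n + 1),
      ∑ k : Fin (n + 2), (((-1 : R) ^ (k : ℕ) * D k) • u k) j = 0 := by
    intro j
    set N : Matrix (Fin (n + 2)) (Fin (n + 2)) R :=
      Matrix.of fun t s => u t ((Fin.cons j (id : Fin (n + 1) → Fin (n + 1)) : Fin (n + 2) → Fin (n + 1)) s) with hN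
    have h0 : Matrix.det N = 0 := by
      rw [← Matrix.det_transpose]
      apply Matrix.detRowAlternating.map_eq_zero_of_eq _ (i := 0) (j := j.succ)
      · funext t
        simp [hN]
      · exact (Fin.succ_ne_zero j).symm
    rw [Matrix.det_succ_column_zero] at h0
    have hsub : ∀ t : Fin (n + 2),
        N.submatrix t.succAbove Fin.succ = Matrix.of fun i s => u (t.succAbove i) s := by
      intro t; ext i s; simp [hN]
    calc ∑ k : Fin (n + 2), (((-1 : R) ^ (k : ℕ) * D k) • u k) j
        = ∑ k : Fin (n + 2), (-1 : R) ^ (k : ℕ) * N k 0 *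
            Matrix.det (N.submatrix k.succAbove Fin.succ) := by
          apply Finset.sum_congr rfl
          intro k _
          rw [hsub k]
          simp [hD, hN]
          ring
      _ = 0 := by
          rw [← h0]
  set L := (Matrix.detRowAlternating (n := Fin (n + 1)) (R := R)).toMultilinearMap.toLinearMap
      (Fin.snoc A 0) (Fin.last n) with hL
  have hupd : ∀ v : Fin (n + 1) → R,
      Function.update (Fin.snoc A (0 : Fin (n + 1) → R)) (Fin.last n) v
        = (Fin.snoc A v : Fin (n + 1) → Fin (n + 1) → R) := by
    intro v
    funext i
    rcases eq_or_ne i (Fin.last n) with rfl | hi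
    · simp
    · rw [Function.update_of_ne hi]
      obtain ⟨i', rfl⟩ := Fin.exists_castSucc_eq.2 hi
      simp
  have hLu : ∀ v : Fin (n + 1) → R, L v = Matrix.det (Matrix.of (Fin.snoc A v)) := by
    intro v
    simp only [hL, MultilinearMap.toLinearMap_apply, hupd]
    rfl
  calc ∑ k : Fin (n + 2), (-1 : R) ^ (k : ℕ) *
        Matrix.det (Matrix.of (Fin.snoc A (u k))) * D k
      = ∑ k : Fin (n + 2), L (((-1 : R) ^ (k : ℕ) * D k) • u k) := by
        apply Finset.sum_congr rfl
        intro k _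
        rw [map_smul, hLu, smul_eq_mul]
        ring
    _ = L (∑ k : Fin (n + 2), ((-1 : R) ^ (k : ℕ) * D k) • u k) := (map_sum L _ _).symm
    _ = L 0 := by
        congr 1
        funext j
        rw [Finset.sum_apply]
        exact key j
    _ = 0 := map_zero L

/-- The Plücker relation for generalized Schur functions: with
`h_r = 0` for `r < 0`, and for any `m ≥ 1` and integers `α_1,…,α_{m-1}`,
`β_1,…,β_{m+1}`, setting `γ⁽ᵏ⁾ = (α_1-1,…,α_{m-1}-1, β_{k+1}+m-k)` and
`δ⁽ᵏ⁾ = (β_1+1,…,β_k+1, β_{k+2},…,β_{m+1})` for `k = 0,…,m`, one has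
`∑_{k=0}^m (-1)^k s_{γ⁽ᵏ⁾} s_{δ⁽ᵏ⁾} = 0`. -/
theorem stmt15 {R : Type*} [CommRing R] (h : ℤ → R)
    (hneg : ∀ r : ℤ, r < 0 → h r = 0)
    (m : ℕ) (hm : 1 ≤ m) (α : Fin (m - 1) → ℤ) (β : Fin (m + 1) → ℤ) :
    ∑ k : Fin (m + 1), (-1 : R) ^ (k : ℕ) *
        sJT h (fun i : Fin m =>
          if hi : (i : ℕ) < m - 1 then α ⟨i, hi⟩ - 1
          else β k + (m : ℤ) - (k : ℕ)) *
        sJT h (fun i : Fin m =>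
          if (i : ℕ) < (k : ℕ) then β (Fin.castSucc i) + 1 else β i.succ) = 0 := by
  obtain ⟨n, rfl⟩ : ∃ n, m = n + 1 := ⟨m - 1, (Nat.succ_pred_eq_of_pos hm).symm⟩
  set A : Fin n → Fin (n + 1) → R := fun i j => h (α i - 1 - (i : ℕ) + (j : ℕ)) with hA
  set u : Fin (n + 2) → Fin (n + 1) → R := fun t j => h (β t + 1 - (t : ℕ) + (j : ℕ)) with hu
  rw [← plucker_aux A u]
  refine Finset.sum_congr rfl fun k _ => ?_
  congr 1
  · congr 1
    unfold sJT
    congr 1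
    ext i j
    simp only [Matrix.of_apply]
    refine Fin.lastCases ?_ (fun i' => ?_) i
    · rw [dif_neg (by simp), Fin.snoc_last]
      simp only [hu]
      congr 1
      simp only [Fin.val_last]
      push_cast
      ring
    · rw [dif_pos (by simp [i'.isLt]), Fin.snoc_castSucc]
      simp only [hA, Fin.coe_castSucc]
      rfl
  · unfold sJT
    congr 1
    ext i j
    simp only [Matrix.of_apply]
    by_cases hik : (i : ℕ) < (k : ℕ)
    · rw [if_pos hik, Fin.succAbove_of_castSucc_lt _ _ (by simpa [Fin.lt_def] using hik)]
      simp only [hu, Fin.coe_castSucc]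
    · rw [if_neg hik,
        Fin.succAbove_of_le_castSucc _ _ (by simpa [Fin.le_def] using Nat.le_of_not_lt hik)]
      simp only [hu, Fin.val_succ]
      congr 1
      push_cast
      ring
end
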